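/- (Factorial Jacobi–Trudi identity, h-version) For a partition λ with at most p parts, s_λ(x|a) = det[ h_{λ_i − i + j}(x | τ^{1−j}a) ]_{1 ≤ i,j ≤ p}, where h_k(x|a) = s_{(k)}(x|a) is the factorial complete homogeneous function and (τ^s a)_n = a_{n+s}. -/

import Mathlib

open Finset
open scoped Classical

noncomputable section

variable {R : Type*} [CommRing R]

/-- shifted sequence: `(τ^s a)_n = a_{n+s}` -/
def shiftSeq (a : ℤ → R) (s : ℤ) : ℤ → R := fun n => a (n + s)

/-- factorial complete homogeneous function `h_k(x|a)`
    (`= Σ_{1≤i_1≤...≤i_k≤p} ∏_r (x_{i_r} - a_{i_r + r - 1})`, `0` for `k < 0`) -/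
def fh (p : ℕ) (x : Fin p → R) (a : ℤ → R) (k : ℤ) : R :=
  if 0 ≤ k then
    ∑ f ∈ Finset.univ.filter (fun f : Fin k.toNat → Fin p => Monotone f),
      ∏ r : Fin k.toNat, (x (f r) - a (((f r : ℕ) : ℤ) + ((r : ℕ) : ℤ) + 1))
  else 0

/-- factorial elementary function `e_k(x|a)`
    (`= Σ_{1≤i_1<...<i_k≤p} ∏_r (x_{i_r} - a_{i_r - r + 1})`, `0` for `k < 0`;
    it vanishes automatically for `k > p`) -/
def fe (p : ℕ) (x : Fin p → R) (a : ℤ → R) (k : ℤ) : R :=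
  if 0 ≤ k then
    ∑ f ∈ Finset.univ.filter (fun f : Fin k.toNat → Fin p => StrictMono f),
      ∏ r : Fin k.toNat, (x (f r) - a (((f r : ℕ) : ℤ) - ((r : ℕ) : ℤ) + 1))
  else 0

/-- generalized factorial power `(y|a)^k = (y - a_1)⋯(y - a_k)` -/
def gfp (y : R) (a : ℤ → R) (k : ℕ) : R :=
  ∏ i ∈ Finset.range k, (y - a ((i : ℤ) + 1))

/-- the factorial Schur polynomial `s_λ(x|a)`, defined through the factorial
    Jacobi-Trudi determinant `det( h_{λ_i - i + j}(x | τ^{1-j} a) )_{1≤i,j≤p}` -/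
def fschur (p : ℕ) (lam : Fin p → ℕ) (x : Fin p → R) (a : ℤ → R) : R :=
  Matrix.det (Matrix.of fun i j : Fin p =>
    fh p x (shiftSeq a (-((j : ℕ) : ℤ))) (((lam i : ℕ) : ℤ) - ((i : ℕ) : ℤ) + ((j : ℕ) : ℤ)))

/-! ### Auxiliary lemmas -/

section Aux

open Polynomial

lemma fh_neg (p : ℕ) (x : Fin p → R) (a : ℤ → R) {k : ℤ} (hk : k < 0) :
    fh p x a k = 0 := by
  rw [fh, if_neg (by omega)]

lemma fh_zero (p : ℕ) (x : Fin p → R) (a : ℤ → R) :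
    fh p x a 0 = 1 := by
  rw [fh, if_pos le_rfl]
  simp only [Int.toNat_zero]
  have h1 : (Finset.univ.filter (fun f : Fin 0 → Fin p => Monotone f))
      = Finset.univ := Finset.filter_true_of_mem (fun f _ => fun i j _ => absurd i.2 (by omega))
  rw [h1]
  have h2 : ∀ f : Fin 0 → Fin p,
      (∏ r : Fin 0, (x (f r) - a (((f r : ℕ) : ℤ) + ((r : ℕ) : ℤ) + 1))) = 1 := by
    intro f
    apply Finset.prod_of_isEmpty
  rw [Finset.sum_congr rfl (fun f _ => h2 f), Finset.sum_const, nsmul_eq_mul, mul_one]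
  have : Fintype.card (Fin 0 → Fin p) = 1 := by
    simp [Fintype.card_fun]
  simp [this]

lemma fh_of_pzero (x : Fin 0 → R) (a : ℤ → R) {k : ℤ} (hk : 1 ≤ k) :
    fh 0 x a k = 0 := by
  rw [fh, if_pos (by omega)]
  haveI : IsEmpty (Fin k.toNat → Fin 0) := ⟨fun f => (f ⟨0, by omega⟩).elim0⟩
  rw [Finset.univ_eq_empty, Finset.filter_empty, Finset.sum_empty]

lemma fh_one (p : ℕ) (x : Fin p → R) (a : ℤ → R) :
    fh p x a 1 = ∑ i : Fin p, (x i - a ((i : ℕ) + 1)) := by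
  rw [fh, if_pos (by omega)]
  simp only [Int.toNat_one]
  have h1 : (Finset.univ.filter (fun f : Fin 1 → Fin p => Monotone f))
      = Finset.univ := Finset.filter_true_of_mem (fun f _ => Subsingleton.monotone f)
  rw [h1]
  rw [← Equiv.sum_comp (Equiv.funUnique (Fin 1) (Fin p)).symm]
  apply Finset.sum_congr rfl
  intro i _
  rw [Fin.prod_univ_one]
  simp [Equiv.funUnique]

/-- `fh` with a natural-number index -/
def fhN (p : ℕ) (x : Fin p → R) (a : ℤ → R) (k : ℕ) : R :=
  ∑ f ∈ Finset.univ.filter (fun f : Fin k → Fin p => Monotone f),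
    ∏ r : Fin k, (x (f r) - a (((f r : ℕ) : ℤ) + ((r : ℕ) : ℤ) + 1))

lemma fh_eq_fhN (p : ℕ) (x : Fin p → R) (a : ℤ → R) {k : ℤ} (hk : 0 ≤ k) :
    fh p x a k = fhN p x a k.toNat := if_pos hk

lemma fhN_rec (n m : ℕ) (x : Fin (n + 1) → R) (a : ℤ → R) :
    fhN (n + 1) x a (m + 1) =
      (x 0 - a 1) * fhN (n + 1) x (shiftSeq a 1) m
        + fhN n (x ∘ Fin.succ) (shiftSeq a 1) (m + 1) := by
  rw [fhN]
  rw [← Finset.sum_filter_add_sum_filter_not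
    (Finset.univ.filter (fun f : Fin (m + 1) → Fin (n + 1) => Monotone f))
    (fun f => f 0 = 0)]
  congr 1
  · -- the `f 0 = 0` part gives the first term
    have step1 : ∀ f ∈ (Finset.univ.filter (fun f : Fin (m + 1) → Fin (n + 1) => Monotone f)).filter
        (fun f => f 0 = 0),
        (∏ r : Fin (m + 1), (x (f r) - a (((f r : ℕ) : ℤ) + ((r : ℕ) : ℤ) + 1)))
          = (x 0 - a 1) *
            ∏ r : Fin m, (x (f r.succ) - a (((f r.succ : ℕ) : ℤ) + ((r.succ : ℕ) : ℤ) + 1)) := by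
      intro f hf
      rw [Finset.mem_filter] at hf
      rw [Fin.prod_univ_succ]
      congr 1
      rw [hf.2]
      norm_num
    rw [Finset.sum_congr rfl step1, ← Finset.mul_sum]
    congr 1
    rw [fhN]
    refine Finset.sum_nbij' (fun f => f ∘ Fin.succ) (fun g => Fin.cases 0 g) ?_ ?_ ?_ ?_ ?_
    · intro f hf
      rw [Finset.mem_filter] at hf ⊢
      exact ⟨Finset.mem_univ _, ((Finset.mem_filter.mp hf.1).2).comp Fin.strictMono_succ.monotone⟩
    · intro g hg
      rw [Finset.mem_filter] at hg ⊢
      refine ⟨Finset.mem_filter.mpr ⟨Finset.mem_univ _, ?_⟩, by simp⟩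
      intro i j hij
      induction i using Fin.cases with
      | zero => simp [Fin.zero_le]
      | succ i' =>
        induction j using Fin.cases with
        | zero =>
          exfalso
          have h2 : (i'.succ : ℕ) ≤ (0 : ℕ) := hij
          simp [Fin.val_succ] at h2
        | succ j' =>
          simp only [Fin.cases_succ]
          exact hg.2 (by rwa [Fin.succ_le_succ_iff] at hij)
    · intro f hf
      rw [Finset.mem_filter] at hf
      funext r
      induction r using Fin.cases with
      | zero => simp [hf.2]
      | succ r' => simp
    · intro g hg
      funext r
      simp
    · intro f hf
      apply Finset.prod_congr rfl
      intro r _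
      simp only [Function.comp_apply, shiftSeq]
      have harg : ((f r.succ : ℕ) : ℤ) + ((r.succ : ℕ) : ℤ) + 1
          = ((f r.succ : ℕ) : ℤ) + ((r : ℕ) : ℤ) + 1 + 1 := by
        push_cast [Fin.val_succ]
        ring
      rw [harg]
  · -- the `f 0 ≠ 0` part gives the second term
    rw [fhN]
    refine Finset.sum_bij
      (i := fun f hf => fun r => (f r).pred (by
        rw [Finset.mem_filter] at hf
        have hmono := (Finset.mem_filter.mp hf.1).2
        have h1 : (f 0 : ℕ) ≤ (f r : ℕ) := hmono (Fin.zero_le r)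
        have h2 : (f 0 : ℕ) ≠ 0 := fun hc => hf.2 (Fin.ext hc)
        intro hc
        have h3 : (f r : ℕ) = 0 := congrArg Fin.val hc
        omega)) ?_ ?_ ?_ ?_
    · intro f hf
      rw [Finset.mem_filter]
      refine ⟨Finset.mem_univ _, ?_⟩
      have hmono := (Finset.mem_filter.mp (Finset.mem_filter.mp hf).1).2
      intro i j hij
      have h5 : (f i : ℕ) ≤ (f j : ℕ) := hmono hij
      simp only [Fin.le_def, Fin.coe_pred]
      omega
    · intro f hf f' hf' heq
      have hpos : ∀ r, 1 ≤ (f r : ℕ) := by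
        intro r
        rw [Finset.mem_filter] at hf
        have hmono := (Finset.mem_filter.mp hf.1).2
        have h1 : (f 0 : ℕ) ≤ (f r : ℕ) := hmono (Fin.zero_le r)
        have h2 : (f 0 : ℕ) ≠ 0 := fun hc => hf.2 (Fin.ext hc)
        omega
      have hpos' : ∀ r, 1 ≤ (f' r : ℕ) := by
        intro r
        rw [Finset.mem_filter] at hf'
        have hmono := (Finset.mem_filter.mp hf'.1).2
        have h1 : (f' 0 : ℕ) ≤ (f' r : ℕ) := hmono (Fin.zero_le r)
        have h2 : (f' 0 : ℕ) ≠ 0 := fun hc => hf'.2 (Fin.ext hc)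
        omega
      funext r
      have hval : (f r : ℕ) - 1 = (f' r : ℕ) - 1 := by
        have h6 := congrFun heq r
        have := congrArg Fin.val h6
        simpa [Fin.coe_pred] using this
      apply Fin.ext
      have := hpos r
      have := hpos' r
      omega
    · intro g hg
      rw [Finset.mem_filter] at hg
      refine ⟨fun r => (g r).succ, ?_, ?_⟩
      · rw [Finset.mem_filter]
        refine ⟨Finset.mem_filter.mpr ⟨Finset.mem_univ _, ?_⟩, ?_⟩
        · intro i j hij
          exact Fin.succ_le_succ_iff.mpr (hg.2 hij)
        · simp [Fin.succ_ne_zero]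
      · funext r
        apply Fin.ext
        simp [Fin.coe_pred]
    · intro f hf
      have hpos : ∀ r, 1 ≤ (f r : ℕ) := by
        intro r
        rw [Finset.mem_filter] at hf
        have hmono := (Finset.mem_filter.mp hf.1).2
        have h1 : (f 0 : ℕ) ≤ (f r : ℕ) := hmono (Fin.zero_le r)
        have h2 : (f 0 : ℕ) ≠ 0 := fun hc => hf.2 (Fin.ext hc)
        omega
      apply Finset.prod_congr rfl
      intro r _
      have h1 := hpos r
      have h4 := (f r).isLt
      congr 1
      · congr 1
        apply Fin.ext
        simp only [Function.comp_apply, Fin.val_succ, Fin.coe_pred]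
        omega
      · simp only [shiftSeq, Fin.coe_pred]
        congr 1
        push_cast
        omega

/-- the fundamental recursion, peeling off the first variable -/
lemma fh_rec (n : ℕ) (x : Fin (n + 1) → R) (a : ℤ → R) (k : ℤ) :
    fh (n + 1) x a k =
      (x 0 - a 1) * fh (n + 1) x (shiftSeq a 1) (k - 1)
        + fh n (x ∘ Fin.succ) (shiftSeq a 1) k := by
  rcases lt_trichotomy k 0 with hk | hk | hk
  · rw [fh_neg _ _ _ hk, fh_neg _ _ _ (by omega), fh_neg _ _ _ hk]
    ring
  · subst hk
    rw [fh_zero, fh_neg _ _ _ (by omega), fh_zero]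
    ring
  · rw [fh_eq_fhN _ _ _ (by omega : (0:ℤ) ≤ k), fh_eq_fhN _ _ _ (by omega : (0:ℤ) ≤ k - 1),
      fh_eq_fhN _ _ _ (by omega : (0:ℤ) ≤ k)]
    have h1 : k.toNat = (k - 1).toNat + 1 := by omega
    rw [h1]
    exact fhN_rec n (k - 1).toNat x a

/-- Newton-basis polynomial with nodes `b r, b (r+1), …, b (r+s-1)` -/
def nprod (b : ℤ → R) (r : ℤ) (s : ℕ) : Polynomial R :=
  ∏ u ∈ Finset.range s, (Polynomial.X - Polynomial.C (b (r + u)))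

lemma nprod_monic (b : ℤ → R) (r : ℤ) (s : ℕ) : (nprod b r s).Monic := by
  exact monic_prod_of_monic _ _ fun u _ => monic_X_sub_C _

lemma nprod_natDegree [Nontrivial R] (b : ℤ → R) (r : ℤ) (s : ℕ) :
    (nprod b r s).natDegree = s := by
  rw [nprod, Polynomial.natDegree_prod_of_monic _ _ (fun u _ => Polynomial.monic_X_sub_C _)]
  simp [Polynomial.natDegree_X_sub_C]

lemma nprod_natDegree_le (b : ℤ → R) (r : ℤ) (s : ℕ) : (nprod b r s).natDegree ≤ s := by
  refine le_trans (Polynomial.natDegree_prod_le _ _) ?_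
  have h : ∀ u ∈ Finset.range s, (Polynomial.X - Polynomial.C (b (r + u))).natDegree ≤ 1 :=
    fun u _ => Polynomial.natDegree_X_sub_C_le (b (r + u))
  refine le_trans (Finset.sum_le_sum h) ?_
  simp

lemma nprod_coeff_self (b : ℤ → R) (r : ℤ) (s : ℕ) : (nprod b r s).coeff s = 1 := by
  nontriviality R
  have h := (nprod_monic b r s).coeff_natDegree
  rwa [nprod_natDegree] at h

lemma nprod_succ' (b : ℤ → R) (r : ℤ) (s : ℕ) :
    nprod b r (s + 1) = (Polynomial.X - Polynomial.C (b r)) * nprod b (r + 1) s := by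
  rw [nprod, Finset.prod_range_succ']
  have h0 : (Polynomial.X - Polynomial.C (b (r + ((0:ℕ):ℤ)))) = Polynomial.X - Polynomial.C (b r) := by
    norm_num
  rw [h0, mul_comm]
  congr 1
  rw [nprod]
  apply Finset.prod_congr rfl
  intro u _
  congr 2
  push_cast
  ring

lemma nprod_shift (a : ℤ → R) (c r : ℤ) (s : ℕ) :
    nprod (shiftSeq a c) r s = nprod a (r + c) s := by
  apply Finset.prod_congr rfl
  intro u _
  congr 2
  show a (r + u + c) = a (r + c + u)
  ring_nf

lemma nprod_eval (b : ℤ → R) (r : ℤ) (s : ℕ) (y : R) :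
    (nprod b r s).eval y = ∏ u ∈ Finset.range s, (y - b (r + u)) := by
  rw [nprod, Polynomial.eval_prod]
  simp

/-- existence of Newton expansions for polynomials of small degree -/
lemma newton_exists (b : ℤ → R) (r : ℤ) (n : ℕ) (F : Polynomial R)
    (hF : F = 0 ∨ F.natDegree < n) :
    ∃ c : ℕ → R, F = ∑ s ∈ Finset.range n, Polynomial.C (c s) * nprod b r s := by
  rcases subsingleton_or_nontrivial R with hS | hN
  · exact ⟨0, Subsingleton.elim _ _⟩
  induction n generalizing F r with
  | zero =>
    rcases hF with h | h
    · exact ⟨0, by simp [h]⟩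
    · omega
  | succ n ih =>
    set Q := F /ₘ (Polynomial.X - Polynomial.C (b r)) with hQ
    have hsplit : Polynomial.C (F.eval (b r)) + (Polynomial.X - Polynomial.C (b r)) * Q = F := by
      rw [hQ, ← Polynomial.modByMonic_X_sub_C_eq_C_eval]
      exact Polynomial.modByMonic_add_div F (Polynomial.X - Polynomial.C (b r))
    have hQd : Q = 0 ∨ Q.natDegree < n := by
      rcases hF with h | h
      · left; rw [hQ, h, Polynomial.zero_divByMonic]
      · by_cases hn : n = 0
        · subst hn
          left
          rw [hQ, Polynomial.divByMonic_eq_zero_iff (Polynomial.monic_X_sub_C _)]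
          refine lt_of_le_of_lt Polynomial.degree_le_natDegree ?_
          rw [Polynomial.degree_X_sub_C]
          have h0 : F.natDegree = 0 := by omega
          rw [h0]
          norm_num
        · right
          rw [hQ, Polynomial.natDegree_divByMonic F (Polynomial.monic_X_sub_C _),
            Polynomial.natDegree_X_sub_C]
          omega
    obtain ⟨d, hd⟩ := ih (r + 1) Q hQd
    refine ⟨fun s => Nat.rec (F.eval (b r)) (fun t _ => d t) s, ?_⟩
    rw [Finset.sum_range_succ']
    show F = (∑ s ∈ Finset.range n, Polynomial.C (d s) * nprod b r (s + 1))
        + Polynomial.C (F.eval (b r)) * nprod b r 0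
    have h2 : ∀ s ∈ Finset.range n,
        Polynomial.C (d s) * nprod b r (s + 1)
          = (Polynomial.X - Polynomial.C (b r)) * (Polynomial.C (d s) * nprod b (r + 1) s) := by
      intro s _
      rw [nprod_succ']
      ring
    rw [Finset.sum_congr rfl h2, ← Finset.mul_sum, ← hd,
      show nprod b r 0 = 1 from rfl, mul_one]
    conv_lhs => rw [← hsplit]
    ring

/-- existence of Newton expansions for a monic product of linear factors -/
lemma prod_X_sub_C_natDegree_le (n : ℕ) (z : Fin n → R) :
    (∏ i : Fin n, (Polynomial.X - Polynomial.C (z i))).natDegree ≤ n := by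
  refine le_trans (Polynomial.natDegree_prod_le _ _) ?_
  have h : ∀ i ∈ Finset.univ, (Polynomial.X - Polynomial.C (z i)).natDegree ≤ 1 :=
    fun i _ => Polynomial.natDegree_X_sub_C_le (z i)
  refine le_trans (Finset.sum_le_sum h) ?_
  simp

lemma prod_X_sub_C_coeff_self (n : ℕ) (z : Fin n → R) :
    (∏ i : Fin n, (Polynomial.X - Polynomial.C (z i))).coeff n = 1 := by
  nontriviality R
  have hm : (∏ i : Fin n, (Polynomial.X - Polynomial.C (z i))).Monic :=
    monic_prod_of_monic _ _ fun i _ => Polynomial.monic_X_sub_C _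
  have hd : (∏ i : Fin n, (Polynomial.X - Polynomial.C (z i))).natDegree = n := by
    rw [Polynomial.natDegree_prod_of_monic _ _ (fun i _ => Polynomial.monic_X_sub_C _)]
    simp [Polynomial.natDegree_X_sub_C]
  have h := hm.coeff_natDegree
  rwa [hd] at h

lemma newton_exists_monic (b : ℤ → R) (r : ℤ) (n : ℕ) (z : Fin n → R) :
    ∃ c : ℕ → R, c n = 1 ∧
      (∏ i : Fin n, (Polynomial.X - Polynomial.C (z i)))
        = ∑ s ∈ Finset.range (n + 1), Polynomial.C (c s) * nprod b r s := by
  set P := ∏ i : Fin n, (Polynomial.X - Polynomial.C (z i)) with hP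
  set D := P - nprod b r n with hD
  have hDd : D = 0 ∨ D.natDegree < n := by
    have hle : D.natDegree ≤ n :=
      le_trans (Polynomial.natDegree_sub_le _ _)
        (max_le (prod_X_sub_C_natDegree_le n z) (nprod_natDegree_le b r n))
    have hcoeff : D.coeff n = 0 := by
      rw [hD, Polynomial.coeff_sub, prod_X_sub_C_coeff_self, nprod_coeff_self, sub_self]
    rcases eq_or_lt_of_le hle with h | h
    · left
      have : D.leadingCoeff = 0 := by rw [Polynomial.leadingCoeff, h, hcoeff]
      exact Polynomial.leadingCoeff_eq_zero.mp this
    · right; exact h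
  obtain ⟨d, hd⟩ := newton_exists b r n D hDd
  refine ⟨Function.update d n 1, Function.update_self _ _ _, ?_⟩
  rw [Finset.sum_range_succ, Function.update_self]
  have h3 : ∀ s ∈ Finset.range n,
      Polynomial.C (Function.update d n 1 s) * nprod b r s
        = Polynomial.C (d s) * nprod b r s := by
    intro s hs
    rw [Function.update_of_ne (by simp at hs; omega)]
  rw [Finset.sum_congr rfl h3, ← hd, hD]
  simp

/-- uniqueness of Newton expansions -/
lemma newton_unique (b : ℤ → R) (r : ℤ) (n : ℕ) (c : ℕ → R)
    (h : ∑ s ∈ Finset.range n, Polynomial.C (c s) * nprod b r s = 0) :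
    ∀ s < n, c s = 0 := by
  induction n generalizing c r with
  | zero => intro s hs; omega
  | succ n ih =>
    have hc0 : c 0 = 0 := by
      have he := congrArg (Polynomial.eval (b r)) h
      rw [Polynomial.eval_finset_sum] at he
      simp only [Polynomial.eval_mul, Polynomial.eval_C, Polynomial.eval_zero] at he
      have hz : ∀ s ∈ Finset.range (n + 1), s ≠ 0 →
          c s * (nprod b r s).eval (b r) = 0 := by
        intro s _ hs
        rw [nprod_eval]
        have : ∏ u ∈ Finset.range s, (b r - b (r + (u:ℕ))) = 0 := by
          apply Finset.prod_eq_zero (Finset.mem_range.mpr (by omega : 0 < s))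
          simp
        rw [this, mul_zero]
      rw [Finset.sum_eq_single 0 (fun s hs hne => hz s hs hne)
        (fun h0 => absurd (Finset.mem_range.mpr (by omega)) h0)] at he
      rw [nprod_eval] at he
      simpa using he
    have hfac : (Polynomial.X - Polynomial.C (b r)) *
        (∑ s ∈ Finset.range n, Polynomial.C (c (s + 1)) * nprod b (r + 1) s) = 0 := by
      rw [Finset.mul_sum]
      have : ∀ s ∈ Finset.range n,
          (Polynomial.X - Polynomial.C (b r)) * (Polynomial.C (c (s + 1)) * nprod b (r + 1) s)
            = Polynomial.C (c (s + 1)) * nprod b r (s + 1) := by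
        intro s _
        rw [nprod_succ']
        ring
      rw [Finset.sum_congr rfl this]
      rw [Finset.sum_range_succ'] at h
      rw [hc0] at h
      simpa using h
    have hreg := (Polynomial.monic_X_sub_C (b r)).isRegular.left
    have hsum : (∑ s ∈ Finset.range n, Polynomial.C (c (s + 1)) * nprod b (r + 1) s) = 0 :=
      hreg (by
        show (Polynomial.X - Polynomial.C (b r)) * _
            = (Polynomial.X - Polynomial.C (b r)) * 0
        rw [mul_zero]
        exact hfac)
    have hih := ih (r + 1) (fun s => c (s + 1)) hsum
    intro s hs
    match s with
    | 0 => exact hc0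
    | t + 1 => exact hih t (by omega)

lemma gfp_add (y : R) (a : ℤ → R) (t s : ℕ) :
    gfp y a (t + s) = gfp y a t * ∏ u ∈ Finset.range s, (y - a ((t : ℤ) + 1 + u)) := by
  rw [gfp, Finset.prod_range_add, gfp]
  congr 1
  apply Finset.prod_congr rfl
  intro u _
  congr 2
  push_cast
  ring

lemma keyG_base (n : ℕ) (x : Fin (n + 1) → R) (b : ℤ → R) (c : ℕ → R)
    (hc : ∑ s ∈ Finset.range (n + 1 + 1), Polynomial.C (c s) * nprod b 1 s
        = ∏ i : Fin (n + 1), (Polynomial.X - Polynomial.C (x i))) :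
    ∑ s ∈ Finset.range (n + 1 + 1), c s * fh (n + 1) x b (1 - (↑(n + 1) : ℤ) + (s : ℕ)) = 0 := by
  have hco : ∀ k : ℕ, ∑ s ∈ Finset.range (n + 1 + 1), c s * (nprod b 1 s).coeff k
      = (∏ i : Fin (n + 1), (Polynomial.X - Polynomial.C (x i))).coeff k := by
    intro k
    have h := congrArg (fun F => Polynomial.coeff F k) hc
    simpa [Polynomial.finset_sum_coeff, Polynomial.coeff_C_mul] using h
  have hcp : c (n + 1) = 1 := by
    have h := hco (n + 1)
    rw [Finset.sum_eq_single (n + 1)] at h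
    · rw [nprod_coeff_self, prod_X_sub_C_coeff_self] at h
      simpa using h
    · intro s hs hne
      rw [Polynomial.coeff_eq_zero_of_natDegree_lt
        (lt_of_le_of_lt (nprod_natDegree_le b 1 s) (by simp at hs; omega)), mul_zero]
    · intro h'
      exact absurd (Finset.mem_range.mpr (by omega)) h'
  have hnn : (nprod b 1 (n + 1)).coeff n = -∑ u ∈ Finset.range (n + 1), b (1 + (u : ℕ)) := by
    have h := Polynomial.prod_X_sub_C_coeff_card_pred (Finset.range (n + 1))
      (fun u => b (1 + (u : ℕ))) (by simp)
    simpa [nprod] using h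
  have hxx : (∏ i : Fin (n + 1), (Polynomial.X - Polynomial.C (x i))).coeff n
      = -∑ i : Fin (n + 1), x i := by
    have h := Polynomial.prod_X_sub_C_coeff_card_pred (Finset.univ : Finset (Fin (n + 1)))
      x (by simp)
    simpa using h
  have hcn : c n = (∑ u ∈ Finset.range (n + 1), b (1 + (u : ℕ))) - ∑ i : Fin (n + 1), x i := by
    have h := hco n
    rw [Finset.sum_range_succ, Finset.sum_range_succ] at h
    have hz : ∀ s ∈ Finset.range n, c s * (nprod b 1 s).coeff n = 0 := by
      intro s hs
      rw [Polynomial.coeff_eq_zero_of_natDegree_lt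
        (lt_of_le_of_lt (nprod_natDegree_le b 1 s) (by simp at hs; omega)), mul_zero]
    rw [Finset.sum_eq_zero hz, zero_add, nprod_coeff_self, hnn, hxx, hcp] at h
    linear_combination h
  rw [Finset.sum_range_succ, Finset.sum_range_succ]
  have hz : ∀ s ∈ Finset.range n,
      c s * fh (n + 1) x b (1 - (↑(n + 1) : ℤ) + (s : ℕ)) = 0 := by
    intro s hs
    rw [fh_neg _ _ _ (by simp at hs; push_cast; omega), mul_zero]
  rw [Finset.sum_eq_zero hz, zero_add]
  have h0 : (1 - (↑(n + 1) : ℤ) + ((n : ℕ) : ℤ)) = 0 := by push_cast; ring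
  have h1 : (1 - (↑(n + 1) : ℤ) + ((n + 1 : ℕ) : ℤ)) = 1 := by push_cast; ring
  rw [h0, h1, fh_zero, fh_one, hcp, hcn, mul_one, one_mul]
  rw [Finset.sum_sub_distrib]
  have hb : ∑ i : Fin (n + 1), b ((i : ℕ) + 1) = ∑ u ∈ Finset.range (n + 1), b (1 + (u : ℕ)) := by
    rw [Fin.sum_univ_eq_sum_range (fun i => b ((i : ℕ) + 1)) (n + 1)]
    apply Finset.sum_congr rfl
    intro u _
    congr 1
    ring
  rw [hb]
  ring

/-- The key recurrence: if `∑_{s≤p} c_s · (X-b_r)⋯(X-b_{r+s-1}) = ∏_i (X - x_i)`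
with `r ≥ 1`, then `∑_{s≤p} c_s · h_{r-p+s}(x|b) = 0`. -/
theorem keyG : ∀ (p : ℕ) (x : Fin p → R) (b : ℤ → R) (r : ℤ), 1 ≤ r →
    ∀ c : ℕ → R,
    (∑ s ∈ Finset.range (p + 1), Polynomial.C (c s) * nprod b r s
        = ∏ i : Fin p, (Polynomial.X - Polynomial.C (x i))) →
    ∑ s ∈ Finset.range (p + 1), c s * fh p x b (r - p + s) = 0 := by
  intro p
  induction p with
  | zero =>
    intro x b r hr c hc
    rw [Finset.sum_range_one]
    rw [fh_of_pzero x b (by push_cast; omega), mul_zero]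
  | succ n ih =>
    intro x b r hr
    revert b
    refine Int.le_induction
      (motive := fun r _ => ∀ (b : ℤ → R) (c : ℕ → R),
        (∑ s ∈ Finset.range (n + 1 + 1), Polynomial.C (c s) * nprod b r s
            = ∏ i : Fin (n + 1), (Polynomial.X - Polynomial.C (x i))) →
        ∑ s ∈ Finset.range (n + 1 + 1),
          c s * fh (n + 1) x b (r - (↑(n + 1) : ℤ) + (s : ℕ)) = 0)
      ?_ ?_ r hr
    · intro b c hc
      exact keyG_base n x b c hc
    · intro r hr IH b c hc
      -- transform using the fundamental recursion for fh
      have hrec : ∀ s ∈ Finset.range (n + 1 + 1),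
          c s * fh (n + 1) x b (r + 1 - (↑(n + 1) : ℤ) + (s : ℕ))
            = (x 0 - b 1) * (c s * fh (n + 1) x (shiftSeq b 1) (r - (↑(n + 1) : ℤ) + (s : ℕ)))
              + c s * fh n (x ∘ Fin.succ) (shiftSeq b 1) (r + 1 - (↑(n + 1) : ℤ) + (s : ℕ)) := by
        intro s _
        rw [fh_rec]
        have harg : (r + 1 - (↑(n + 1) : ℤ) + (s : ℕ) - 1) = r - (↑(n + 1) : ℤ) + (s : ℕ) := by
          ring
        rw [harg]
        ring
      rw [Finset.sum_congr rfl hrec, Finset.sum_add_distrib, ← Finset.mul_sum]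
      -- first summand dies by the inner induction hypothesis
      have hc1 : ∑ s ∈ Finset.range (n + 1 + 1), Polynomial.C (c s) * nprod (shiftSeq b 1) r s
          = ∏ i : Fin (n + 1), (Polynomial.X - Polynomial.C (x i)) := by
        have h : ∀ s ∈ Finset.range (n + 1 + 1),
            Polynomial.C (c s) * nprod (shiftSeq b 1) r s
              = Polynomial.C (c s) * nprod b (r + 1) s := by
          intro s _
          rw [nprod_shift]
        rw [Finset.sum_congr rfl h]
        exact hc
      have hS1 : ∑ s ∈ Finset.range (n + 1 + 1),
          c s * fh (n + 1) x (shiftSeq b 1) (r - (↑(n + 1) : ℤ) + (s : ℕ)) = 0 :=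
        IH (shiftSeq b 1) c hc1
      rw [hS1, mul_zero, zero_add]
      -- second summand via the outer induction hypothesis
      obtain ⟨d, -, hd⟩ := newton_exists_monic b (r + 1) n (x ∘ Fin.succ)
      obtain ⟨e, -, he⟩ := newton_exists_monic b (r + 2) n (x ∘ Fin.succ)
      have hQsplit : (Polynomial.X - Polynomial.C (x 0)) *
          (∏ i : Fin n, (Polynomial.X - Polynomial.C ((x ∘ Fin.succ) i)))
          = ∏ i : Fin (n + 1), (Polynomial.X - Polynomial.C (x i)) :=
        (Fin.prod_univ_succ (fun i => Polynomial.X - Polynomial.C (x i))).symm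
      have hc'sum : ∑ s ∈ Finset.range (n + 1 + 1),
          Polynomial.C ((if s = 0 then 0 else e (s - 1))
            + (if s ≤ n then (b (r + 1) - x 0) * d s else 0)) * nprod b (r + 1) s
          = ∏ i : Fin (n + 1), (Polynomial.X - Polynomial.C (x i)) := by
        have hsplit : ∀ s ∈ Finset.range (n + 1 + 1),
            Polynomial.C ((if s = 0 then 0 else e (s - 1))
              + (if s ≤ n then (b (r + 1) - x 0) * d s else 0)) * nprod b (r + 1) s
              = Polynomial.C (if s = 0 then 0 else e (s - 1)) * nprod b (r + 1) s
                + Polynomial.C (if s ≤ n then (b (r + 1) - x 0) * d s else 0)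
                  * nprod b (r + 1) s := by
          intro s _
          rw [Polynomial.C_add, add_mul]
        rw [Finset.sum_congr rfl hsplit, Finset.sum_add_distrib]
        have hA : ∑ s ∈ Finset.range (n + 1 + 1),
            Polynomial.C (if s = 0 then (0:R) else e (s - 1)) * nprod b (r + 1) s
            = (Polynomial.X - Polynomial.C (b (r + 1))) *
              ∏ i : Fin n, (Polynomial.X - Polynomial.C ((x ∘ Fin.succ) i)) := by
          rw [Finset.sum_range_succ']
          have h1 : ∀ s ∈ Finset.range (n + 1),
              Polynomial.C (if s + 1 = 0 then (0:R) else e (s + 1 - 1)) * nprod b (r + 1) (s + 1)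
                = (Polynomial.X - Polynomial.C (b (r + 1))) *
                  (Polynomial.C (e s) * nprod b (r + 2) s) := by
            intro s _
            rw [if_neg (Nat.succ_ne_zero s), Nat.add_sub_cancel, nprod_succ']
            have harg : (r + 1 + 1 : ℤ) = r + 2 := by ring
            rw [harg]
            ring
          rw [Finset.sum_congr rfl h1, ← Finset.mul_sum, ← he]
          simp
        have hB : ∑ s ∈ Finset.range (n + 1 + 1),
            Polynomial.C (if s ≤ n then (b (r + 1) - x 0) * d s else 0) * nprod b (r + 1) s
            = Polynomial.C (b (r + 1) - x 0) *
              ∏ i : Fin n, (Polynomial.X - Polynomial.C ((x ∘ Fin.succ) i)) := by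
          rw [Finset.sum_range_succ, if_neg (by omega)]
          have h1 : ∀ s ∈ Finset.range (n + 1),
              Polynomial.C (if s ≤ n then (b (r + 1) - x 0) * d s else 0) * nprod b (r + 1) s
                = Polynomial.C (b (r + 1) - x 0) * (Polynomial.C (d s) * nprod b (r + 1) s) := by
            intro s hs
            rw [if_pos (by simp at hs; omega), Polynomial.C_mul]
            ring
          rw [Finset.sum_congr rfl h1, ← Finset.mul_sum, ← hd]
          simp
        rw [hA, hB, ← hQsplit, Polynomial.C_sub]
        ring
      have hcc : ∀ s ∈ Finset.range (n + 1 + 1),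
          c s = (if s = 0 then 0 else e (s - 1))
            + (if s ≤ n then (b (r + 1) - x 0) * d s else 0) := by
        have hzero : ∑ s ∈ Finset.range (n + 1 + 1),
            Polynomial.C (c s - ((if s = 0 then 0 else e (s - 1))
              + (if s ≤ n then (b (r + 1) - x 0) * d s else 0))) * nprod b (r + 1) s = 0 := by
          have h1 : ∀ s ∈ Finset.range (n + 1 + 1),
              Polynomial.C (c s - ((if s = 0 then 0 else e (s - 1))
                + (if s ≤ n then (b (r + 1) - x 0) * d s else 0))) * nprod b (r + 1) s
                = Polynomial.C (c s) * nprod b (r + 1) s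
                  - Polynomial.C ((if s = 0 then 0 else e (s - 1))
                    + (if s ≤ n then (b (r + 1) - x 0) * d s else 0)) * nprod b (r + 1) s := by
            intro s _
            rw [Polynomial.C_sub, sub_mul]
          rw [Finset.sum_congr rfl h1, Finset.sum_sub_distrib, hc, hc'sum, sub_self]
        intro s hs
        have h2 := newton_unique b (r + 1) (n + 1 + 1) _ hzero s (Finset.mem_range.mp hs)
        exact sub_eq_zero.mp h2
      have hsplit2 : ∀ s ∈ Finset.range (n + 1 + 1),
          c s * fh n (x ∘ Fin.succ) (shiftSeq b 1) (r + 1 - (↑(n + 1) : ℤ) + (s : ℕ))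
            = (if s = 0 then 0 else e (s - 1)) *
                fh n (x ∘ Fin.succ) (shiftSeq b 1) (r + 1 - (↑(n + 1) : ℤ) + (s : ℕ))
              + (if s ≤ n then (b (r + 1) - x 0) * d s else 0) *
                fh n (x ∘ Fin.succ) (shiftSeq b 1) (r + 1 - (↑(n + 1) : ℤ) + (s : ℕ)) := by
        intro s hs
        rw [hcc s hs, add_mul]
      rw [Finset.sum_congr rfl hsplit2, Finset.sum_add_distrib]
      have hE : ∑ s ∈ Finset.range (n + 1 + 1),
          (if s = 0 then (0:R) else e (s - 1)) *
            fh n (x ∘ Fin.succ) (shiftSeq b 1) (r + 1 - (↑(n + 1) : ℤ) + (s : ℕ)) = 0 := by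
        rw [Finset.sum_range_succ']
        have h1 : ∀ s ∈ Finset.range (n + 1),
            (if s + 1 = 0 then (0:R) else e (s + 1 - 1)) *
              fh n (x ∘ Fin.succ) (shiftSeq b 1) (r + 1 - (↑(n + 1) : ℤ) + ((s + 1 : ℕ) : ℤ))
              = e s * fh n (x ∘ Fin.succ) (shiftSeq b 1) (r + 1 - (↑n : ℤ) + (s : ℕ)) := by
          intro s _
          rw [if_neg (Nat.succ_ne_zero s), Nat.add_sub_cancel]
          congr 2
          push_cast
          ring
        rw [Finset.sum_congr rfl h1]
        have he' : ∑ s ∈ Finset.range (n + 1),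
            Polynomial.C (e s) * nprod (shiftSeq b 1) (r + 1) s
            = ∏ i : Fin n, (Polynomial.X - Polynomial.C ((x ∘ Fin.succ) i)) := by
          have h2 : ∀ s ∈ Finset.range (n + 1),
              Polynomial.C (e s) * nprod (shiftSeq b 1) (r + 1) s
                = Polynomial.C (e s) * nprod b (r + 2) s := by
            intro s _
            rw [nprod_shift]
            have harg : (r + 1 + 1 : ℤ) = r + 2 := by ring
            rw [harg]
          rw [Finset.sum_congr rfl h2]
          exact he.symm
        have h3 := ih (x ∘ Fin.succ) (shiftSeq b 1) (r + 1) (by omega) e he'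
        rw [h3, zero_add]
        simp
      have hD : ∑ s ∈ Finset.range (n + 1 + 1),
          (if s ≤ n then (b (r + 1) - x 0) * d s else 0) *
            fh n (x ∘ Fin.succ) (shiftSeq b 1) (r + 1 - (↑(n + 1) : ℤ) + (s : ℕ)) = 0 := by
        rw [Finset.sum_range_succ, if_neg (by omega), zero_mul, add_zero]
        have h1 : ∀ s ∈ Finset.range (n + 1),
            (if s ≤ n then (b (r + 1) - x 0) * d s else 0) *
              fh n (x ∘ Fin.succ) (shiftSeq b 1) (r + 1 - (↑(n + 1) : ℤ) + (s : ℕ))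
              = (b (r + 1) - x 0) *
                (d s * fh n (x ∘ Fin.succ) (shiftSeq b 1) (r - (↑n : ℤ) + (s : ℕ))) := by
          intro s hs
          rw [if_pos (by simp at hs; omega)]
          have harg : (r + 1 - (↑(n + 1) : ℤ) + (s : ℕ)) = r - (↑n : ℤ) + (s : ℕ) := by
            push_cast
            ring
          rw [harg]
          ring
        rw [Finset.sum_congr rfl h1, ← Finset.mul_sum]
        have hd' : ∑ s ∈ Finset.range (n + 1),
            Polynomial.C (d s) * nprod (shiftSeq b 1) r s
            = ∏ i : Fin n, (Polynomial.X - Polynomial.C ((x ∘ Fin.succ) i)) := by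
          have h2 : ∀ s ∈ Finset.range (n + 1),
              Polynomial.C (d s) * nprod (shiftSeq b 1) r s
                = Polynomial.C (d s) * nprod b (r + 1) s := by
            intro s _
            rw [nprod_shift]
          rw [Finset.sum_congr rfl h2]
          exact hd.symm
        rw [ih (x ∘ Fin.succ) (shiftSeq b 1) r hr d hd', mul_zero]
      rw [hE, hD, add_zero]

end Aux

section Main

variable (p : ℕ) (x : Fin p → R) (a : ℤ → R)

/-- the Jacobi–Trudi matrix for a (not necessarily monotone) `lam` -/
def Hmat (lam : Fin p → ℕ) : Matrix (Fin p) (Fin p) R :=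
  Matrix.of fun i j : Fin p =>
    fh p x (shiftSeq a (-((j : ℕ) : ℤ))) (((lam i : ℕ) : ℤ) - ((i : ℕ) : ℤ) + ((j : ℕ) : ℤ))

/-- the "alternant" matrix -/
def Amat (lam : Fin p → ℕ) : Matrix (Fin p) (Fin p) R :=
  Matrix.of fun i j : Fin p => gfp (x j) a (lam i + (p - 1 - (i : ℕ)))

lemma det_Hmat_zero : (Hmat p x a 0).det = 1 := by
  have ht : (Hmat p x a 0).BlockTriangular id := by
    intro i j hij
    show fh p x _ _ = 0
    apply fh_neg
    have hij' : (j : ℕ) < (i : ℕ) := hij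
    have : ((0 : Fin p → ℕ) i : ℤ) = 0 := by simp
    rw [this]
    omega
  rw [Matrix.det_of_upperTriangular ht]
  apply Finset.prod_eq_one
  intro i _
  show fh p x _ _ = 1
  have harg : (((0 : Fin p → ℕ) i : ℕ) : ℤ) - ((i : ℕ) : ℤ) + ((i : ℕ) : ℤ) = 0 := by
    simp
  rw [harg, fh_zero]

def Emat : Matrix (Fin p) (Fin p) R := (Hmat p x a 0)⁻¹ * Amat p x a 0

lemma Hmat_mul_Emat : Hmat p x a 0 * Emat p x a = Amat p x a 0 := by
  rw [Emat]
  exact Matrix.mul_nonsing_inv_cancel_left _ _ (by rw [det_Hmat_zero]; exact isUnit_one)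

/-- the key expansion `(x_j|a)^m = ∑_k h_{m-(p-1)+k}(x|τ^{-k}a) E_{k,j}` -/
lemma star (m : ℕ) (j : Fin p) :
    gfp (x j) a m =
      ∑ k : Fin p, fh p x (shiftSeq a (-((k : ℕ) : ℤ))) ((m : ℤ) - (p - 1) + (k : ℕ))
        * Emat p x a k j := by
  induction m using Nat.strong_induction_on generalizing j with
  | _ m IH =>
  rcases Nat.eq_zero_or_pos p with hp | hp
  · subst hp
    exact j.elim0
  rcases Nat.lt_or_ge m p with hm | hm
  · -- base case : use the defining property of Emat
    have hME := Hmat_mul_Emat p x a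
    set i : Fin p := ⟨p - 1 - m, by omega⟩ with hi
    have h := congrFun (congrFun (congrArg (fun M => (M : Matrix (Fin p) (Fin p) R)) hME) i) j
    simp only [Matrix.mul_apply] at h
    have hAm : Amat p x a 0 i j = gfp (x j) a m := by
      show gfp (x j) a ((0 : Fin p → ℕ) i + (p - 1 - (i : ℕ))) = _
      congr 1
      show 0 + (p - 1 - (p - 1 - m)) = m
      omega
    rw [hAm] at h
    rw [← h]
    apply Finset.sum_congr rfl
    intro k _
    have harg : (((0 : Fin p → ℕ) i : ℕ) : ℤ) - ((i : ℕ) : ℤ) + ((k : ℕ) : ℤ)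
        = (m : ℤ) - ((p : ℤ) - 1) + ((k : ℕ) : ℤ) := by
      have hiv : (i : ℕ) = p - 1 - m := rfl
      rw [hiv]
      simp only [Pi.zero_apply, Nat.cast_zero]
      omega
    show fh p x (shiftSeq a (-((k : ℕ) : ℤ)))
        ((((0 : Fin p → ℕ) i : ℕ) : ℤ) - ((i : ℕ) : ℤ) + ((k : ℕ) : ℤ)) * Emat p x a k j = _
    rw [harg]
  · -- inductive case : m ≥ p
    obtain ⟨γ, hγ1, hγ⟩ := newton_exists_monic a ((m - p : ℕ) + 1) p x
    -- evaluate the expansion at x j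
    have hevalP : Polynomial.eval (x j) (∏ i : Fin p, (Polynomial.X - Polynomial.C (x i))) = 0 := by
      rw [Polynomial.eval_prod]
      apply Finset.prod_eq_zero (Finset.mem_univ j)
      simp
    have hev : ∑ s ∈ Finset.range (p + 1),
        γ s * ∏ u ∈ Finset.range s, (x j - a (((m - p : ℕ) : ℤ) + 1 + (u : ℕ))) = 0 := by
      have h1 := congrArg (Polynomial.eval (x j)) hγ
      rw [hevalP, Polynomial.eval_finset_sum] at h1
      have h2 : ∀ s ∈ Finset.range (p + 1),
          Polynomial.eval (x j) (Polynomial.C (γ s) * nprod a ((m - p : ℕ) + 1) s)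
            = γ s * ∏ u ∈ Finset.range s, (x j - a (((m - p : ℕ) : ℤ) + 1 + (u : ℕ))) := by
        intro s _
        rw [Polynomial.eval_mul, Polynomial.eval_C, nprod_eval]
      rw [Finset.sum_congr rfl h2] at h1
      exact h1.symm
    -- multiply by gfp (x j) a (m - p)
    have hmul : ∀ s : ℕ,
        gfp (x j) a (m - p) * ∏ u ∈ Finset.range s, (x j - a (((m - p : ℕ) : ℤ) + 1 + (u : ℕ)))
          = gfp (x j) a ((m - p) + s) := by
      intro s
      rw [gfp_add]
    have key1 : gfp (x j) a m
        = -∑ s ∈ Finset.range p, γ s * gfp (x j) a ((m - p) + s) := by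
      have h1 := congrArg (fun z => gfp (x j) a (m - p) * z) hev
      simp only [mul_zero, Finset.mul_sum] at h1
      have h2 : ∀ s ∈ Finset.range (p + 1),
          gfp (x j) a (m - p) *
            (γ s * ∏ u ∈ Finset.range s, (x j - a (((m - p : ℕ) : ℤ) + 1 + (u : ℕ))))
            = γ s * gfp (x j) a ((m - p) + s) := by
        intro s _
        rw [← hmul s]
        ring
      rw [Finset.sum_congr rfl h2, Finset.sum_range_succ, hγ1, one_mul] at h1
      have h3 : (m - p) + p = m := by omega
      rw [h3] at h1
      linear_combination h1
    -- the fh side satisfies the same recurrence (keyG)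
    have hB : ∀ k : Fin p,
        fh p x (shiftSeq a (-((k : ℕ) : ℤ))) ((m : ℤ) - (p - 1) + (k : ℕ))
          = -∑ s ∈ Finset.range p,
              γ s * fh p x (shiftSeq a (-((k : ℕ) : ℤ)))
                ((((m - p) + s : ℕ) : ℤ) - (p - 1) + (k : ℕ)) := by
      intro k
      have hyp : ∑ s ∈ Finset.range (p + 1),
          Polynomial.C (γ s) * nprod (shiftSeq a (-((k : ℕ) : ℤ)))
            (((m - p : ℕ) : ℤ) + 1 + ((k : ℕ) : ℤ)) s
          = ∏ i : Fin p, (Polynomial.X - Polynomial.C (x i)) := by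
        have h2 : ∀ s ∈ Finset.range (p + 1),
            Polynomial.C (γ s) * nprod (shiftSeq a (-((k : ℕ) : ℤ)))
              (((m - p : ℕ) : ℤ) + 1 + ((k : ℕ) : ℤ)) s
              = Polynomial.C (γ s) * nprod a ((m - p : ℕ) + 1) s := by
          intro s _
          rw [nprod_shift]
          have harg : ((m - p : ℕ) : ℤ) + 1 + ((k : ℕ) : ℤ) + -((k : ℕ) : ℤ)
              = ((m - p : ℕ) : ℤ) + 1 := by ring
          rw [harg]
        rw [Finset.sum_congr rfl h2]
        exact hγ.symm
      have h3 := keyG p x (shiftSeq a (-((k : ℕ) : ℤ)))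
        (((m - p : ℕ) : ℤ) + 1 + ((k : ℕ) : ℤ)) (by omega) γ hyp
      rw [Finset.sum_range_succ, hγ1, one_mul] at h3
      have harg1 : (((m - p : ℕ) : ℤ) + 1 + ((k : ℕ) : ℤ)) - (p : ℕ) + ((p : ℕ) : ℤ)
          = (m : ℤ) - ((p:ℤ) - 1) + ((k : ℕ) : ℤ) := by omega
      rw [harg1] at h3
      have h4 : ∀ s ∈ Finset.range p,
          γ s * fh p x (shiftSeq a (-((k : ℕ) : ℤ)))
            ((((m - p : ℕ) : ℤ) + 1 + ((k : ℕ) : ℤ)) - (p : ℕ) + (s : ℕ))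
            = γ s * fh p x (shiftSeq a (-((k : ℕ) : ℤ)))
              ((((m - p) + s : ℕ) : ℤ) - ((p:ℤ) - 1) + ((k : ℕ) : ℤ)) := by
        intro s _
        congr 2
        omega
      rw [Finset.sum_congr rfl h4] at h3
      linear_combination h3
    -- put everything together
    have h5 : ∀ k ∈ Finset.univ (α := Fin p),
        fh p x (shiftSeq a (-((k : ℕ) : ℤ))) ((m : ℤ) - (p - 1) + (k : ℕ)) * Emat p x a k j
          = -∑ s ∈ Finset.range p,
              γ s * (fh p x (shiftSeq a (-((k : ℕ) : ℤ)))
                ((((m - p) + s : ℕ) : ℤ) - (p - 1) + (k : ℕ)) * Emat p x a k j) := by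
      intro k _
      rw [hB k, neg_mul, Finset.sum_mul]
      congr 1
      apply Finset.sum_congr rfl
      intro s _
      ring
    have hfinal : (∑ k : Fin p,
        fh p x (shiftSeq a (-((k : ℕ) : ℤ))) ((m : ℤ) - (p - 1) + (k : ℕ)) * Emat p x a k j)
        = -∑ s ∈ Finset.range p, γ s * gfp (x j) a ((m - p) + s) := by
      calc (∑ k : Fin p,
          fh p x (shiftSeq a (-((k : ℕ) : ℤ))) ((m : ℤ) - (p - 1) + (k : ℕ)) * Emat p x a k j)
          = ∑ k : Fin p, -∑ s ∈ Finset.range p,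
              γ s * (fh p x (shiftSeq a (-((k : ℕ) : ℤ)))
                ((((m - p) + s : ℕ) : ℤ) - (p - 1) + (k : ℕ)) * Emat p x a k j) :=
            Finset.sum_congr rfl h5
        _ = -∑ k : Fin p, ∑ s ∈ Finset.range p,
              γ s * (fh p x (shiftSeq a (-((k : ℕ) : ℤ)))
                ((((m - p) + s : ℕ) : ℤ) - (p - 1) + (k : ℕ)) * Emat p x a k j) := by
            rw [Finset.sum_neg_distrib]
        _ = -∑ s ∈ Finset.range p, ∑ k : Fin p,
              γ s * (fh p x (shiftSeq a (-((k : ℕ) : ℤ)))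
                ((((m - p) + s : ℕ) : ℤ) - (p - 1) + (k : ℕ)) * Emat p x a k j) := by
            rw [Finset.sum_comm]
        _ = -∑ s ∈ Finset.range p, γ s * ∑ k : Fin p,
              fh p x (shiftSeq a (-((k : ℕ) : ℤ)))
                ((((m - p) + s : ℕ) : ℤ) - (p - 1) + (k : ℕ)) * Emat p x a k j := by
            congr 1
            exact Finset.sum_congr rfl fun s _ => (Finset.mul_sum _ _ _).symm
        _ = -∑ s ∈ Finset.range p, γ s * gfp (x j) a ((m - p) + s) := by
            congr 1
            refine Finset.sum_congr rfl fun s hs => ?_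
            rw [← IH ((m - p) + s) (by simp at hs; omega) j]
    rw [key1, hfinal]

lemma Hmat_mul_Emat_gen (lam : Fin p → ℕ) :
    Hmat p x a lam * Emat p x a = Amat p x a lam := by
  ext i j
  rw [Matrix.mul_apply]
  show _ = gfp (x j) a (lam i + (p - 1 - (i : ℕ)))
  rw [star p x a (lam i + (p - 1 - (i : ℕ))) j]
  apply Finset.sum_congr rfl
  intro k _
  have harg : ((lam i : ℕ) : ℤ) - ((i : ℕ) : ℤ) + ((k : ℕ) : ℤ)
      = ((lam i + (p - 1 - (i : ℕ)) : ℕ) : ℤ) - ((p:ℤ) - 1) + ((k : ℕ) : ℤ) := by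
    have := i.isLt
    omega
  show fh p x (shiftSeq a (-((k : ℕ) : ℤ)))
      (((lam i : ℕ) : ℤ) - ((i : ℕ) : ℤ) + ((k : ℕ) : ℤ)) * Emat p x a k j = _
  rw [harg]

end Main

/-- (Factorial Jacobi-Trudi, h-version.)  The factorial Schur function,
    i.e. the ratio `det[(x_j|a)^{λ_i+p-i}] / det[(x_j|a)^{p-i}]`, equals the determinant
    `det[h_{λ_i-i+j}(x|τ^{1-j}a)]`; equivalently (clearing the denominator):
    `det[(x_j|a)^{p-i}] · det[h_{λ_i-i+j}(x|τ^{1-j}a)] = det[(x_j|a)^{λ_i+p-i}]`. -/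
theorem factorial_jacobiTrudi_h (p : ℕ) (x : Fin p → R) (a : ℤ → R)
    (lam : Fin p → ℕ) (hlam : Antitone lam) :
    Matrix.det (Matrix.of fun i j : Fin p => gfp (x j) a (p - 1 - (i : ℕ))) *
        fschur p lam x a =
      Matrix.det (Matrix.of fun i j : Fin p => gfp (x j) a (lam i + (p - 1 - (i : ℕ)))) := by
  have h0 : Matrix.det (Matrix.of fun i j : Fin p => gfp (x j) a (p - 1 - (i : ℕ)))
      = (Amat p x a 0).det := by
    congr 1
    ext i j
    simp [Amat]
  have hs : fschur p lam x a = (Hmat p x a lam).det := rfl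
  rw [h0, hs, ← Hmat_mul_Emat p x a, Matrix.det_mul, det_Hmat_zero, one_mul,
    mul_comm, ← Matrix.det_mul, Hmat_mul_Emat_gen]
  rfl
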